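/- Strict submodularity gap via correlation: for a positive definite kernel matrix K indexed by D with σ² = 0, if A ⊆ D, x, y ∉ A, and k(x,y)-correlations given A are nonzero, then det(K_{A∪{x,y}})·det(K_A) < det(K_{A∪{x}})·det(K_{A∪{y}}) (the determinantal form of strict submodularity of log det). -/

import Mathlib

open Matrix

variable {D : Type*} [Fintype D] [DecidableEq D]

/-- Principal submatrix of `K` indexed by the finite subset `Z`. -/
def gram (K : Matrix D D ℝ) (Z : Finset D) : Matrix Z Z ℝ :=
  K.submatrix (fun i => (i : D)) (fun j => (j : D))

/-- The cross-covariance vector `k_{A,z} = (k(a, z))_{a ∈ A}`. -/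
def crossVec (K : Matrix D D ℝ) (A : Finset D) (z : D) : A → ℝ :=
  fun a => K (a : D) z

/-- Conditional covariance of `u` and `v` given `A`. -/
noncomputable def condCov (K : Matrix D D ℝ) (A : Finset D) (u v : D) : ℝ :=
  K u v - (fun a : A => K u a) ⬝ᵥ ((gram K A)⁻¹ *ᵥ fun a : A => K a v)

theorem posDef_submatrix' {n m : Type*} [Fintype n] [DecidableEq n] [Fintype m] [DecidableEq m]
    {M : Matrix n n ℝ} (hM : M.PosDef) (e : m → n) (he : Function.Injective e) :
    (M.submatrix e e).PosDef := by
  refine Matrix.PosDef.of_dotProduct_mulVec_pos (hM.1.submatrix e) fun v hv => ?_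
  set P : Matrix n m ℝ := (1 : Matrix n n ℝ).submatrix id e with hP
  have key : M.submatrix e e = Pᵀ * M * P := by
    rw [(by simp : M.submatrix e e = (1 * M * 1).submatrix e e),
      Matrix.submatrix_mul _ _ _ _ _ Function.bijective_id,
      Matrix.submatrix_mul _ _ _ _ _ Function.bijective_id, Matrix.submatrix_id_id]
    congr 1
    · congr 1
      ext i j
      simp [hP, Matrix.one_apply, eq_comm]
  have hPv : P *ᵥ v ≠ 0 := by
    obtain ⟨i₀, hi₀⟩ := Function.ne_iff.mp hv
    intro h
    apply hi₀
    have := congrFun h (e i₀)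
    simpa [hP, Matrix.mulVec, dotProduct, Matrix.one_apply, he.eq_iff] using this
  have := hM.dotProduct_mulVec_pos hPv
  simpa [key, star_trivial, ← Matrix.mulVec_mulVec, Matrix.dotProduct_mulVec,
    Matrix.vecMul_transpose] using this

theorem gram_posDef {K : Matrix D D ℝ} (hK : K.PosDef) (Z : Finset D) : (gram K Z).PosDef :=
  posDef_submatrix' hK _ Subtype.val_injective

/-- The reindexing equivalence for a one-element insertion. -/
def insEquiv (A : Finset D) (z : D) (hz : z ∉ A) :
    Unit ⊕ {a // a ∈ A} ≃ {a // a ∈ insert z A} where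
  toFun := Sum.elim (fun _ => ⟨z, Finset.mem_insert_self z A⟩)
    (fun a => ⟨a.1, Finset.mem_insert_of_mem a.2⟩)
  invFun := fun w => if h : w.1 ∈ A then Sum.inr ⟨w.1, h⟩ else Sum.inl ()
  left_inv := by
    rintro (⟨⟩ | a)
    · simp [hz]
    · simp
  right_inv := fun w => by
    dsimp only
    rcases Finset.mem_insert.mp w.2 with h | h
    · rw [dif_neg (show ¬ (w.1 ∈ A) from fun hw => hz (h ▸ hw))]
      exact Subtype.ext h.symm
    · rw [dif_pos h]
      exact Subtype.ext rfl

theorem det_gram_insert (K : Matrix D D ℝ) (hK : K.PosDef) (A : Finset D) (z : D) (hz : z ∉ A) :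
    (gram K (insert z A)).det = (gram K A).det * condCov K A z z := by
  haveI : Invertible (gram K A) :=
    Matrix.invertibleOfIsUnitDet _ (isUnit_iff_ne_zero.mpr (gram_posDef hK A).det_pos.ne')
  set e := insEquiv A z hz with he
  have hgram : (gram K (insert z A)).submatrix e e =
      fromBlocks (Matrix.of fun _ _ : Unit => K z z) (Matrix.of fun _ (a : A) => K z a)
        (Matrix.of fun (a : A) _ => K a z) (gram K A) := by
    ext i j
    cases i <;> cases j <;> rfl
  rw [← Matrix.det_submatrix_equiv_self e, hgram, Matrix.det_fromBlocks₂₂]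
  congr 1
  rw [Matrix.det_unique]
  simp only [Matrix.sub_apply, Matrix.of_apply, invOf_eq_nonsing_inv, condCov]
  congr 1
  rw [Matrix.mul_assoc]
  simp [Matrix.mul_apply, Matrix.mulVec, dotProduct, Finset.mul_sum]

/-- The two new indices, as elements of `insert x (insert y A)`. -/
def ff (A : Finset D) (x y : D) : Fin 2 → {a // a ∈ insert x (insert y A)} :=
  ![⟨x, Finset.mem_insert_self x _⟩,
    ⟨y, Finset.mem_insert_of_mem (Finset.mem_insert_self y A)⟩]

/-- The reindexing equivalence for a two-element insertion. -/
def insEquiv2 (A : Finset D) (x y : D) (hx : x ∉ A) (hy : y ∉ A) (hxy : x ≠ y) :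
    Fin 2 ⊕ {a // a ∈ A} ≃ {a // a ∈ insert x (insert y A)} where
  toFun := Sum.elim (ff A x y)
    (fun a => ⟨a.1, Finset.mem_insert_of_mem (Finset.mem_insert_of_mem a.2)⟩)
  invFun := fun w =>
    if h : w.1 ∈ A then Sum.inr ⟨w.1, h⟩ else if w.1 = x then Sum.inl 0 else Sum.inl 1
  left_inv := by
    rintro (i | a)
    · fin_cases i
      · simp [ff, hx]
      · simp [ff, hy, hxy.symm]
    · simp
  right_inv := fun w => by
    dsimp only
    rcases Finset.mem_insert.mp w.2 with h | h'
    · rw [dif_neg (show ¬ (w.1 ∈ A) from fun hw => hx (h ▸ hw)), if_pos h]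
      exact Subtype.ext h.symm
    · rcases Finset.mem_insert.mp h' with h | h
      · rw [dif_neg (show ¬ (w.1 ∈ A) from fun hw => hy (h ▸ hw)),
          if_neg (show ¬ (w.1 = x) from fun hw => hxy (hw.symm.trans h))]
        exact Subtype.ext h.symm
      · rw [dif_pos h]
        exact Subtype.ext rfl

theorem det_gram_insert_two (K : Matrix D D ℝ) (hK : K.PosDef) (A : Finset D) (x y : D)
    (hx : x ∉ A) (hy : y ∉ A) (hxy : x ≠ y) :
    (gram K (insert x (insert y A))).det =
      (gram K A).det *
        (condCov K A x x * condCov K A y y - condCov K A x y * condCov K A y x) := by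
  haveI : Invertible (gram K A) :=
    Matrix.invertibleOfIsUnitDet _ (isUnit_iff_ne_zero.mpr (gram_posDef hK A).det_pos.ne')
  set e := insEquiv2 A x y hx hy hxy with he
  have hgram : (gram K (insert x (insert y A))).submatrix e e =
      fromBlocks (Matrix.of fun i j : Fin 2 => K (ff A x y i) (ff A x y j))
        (Matrix.of fun i (a : A) => K (ff A x y i) a)
        (Matrix.of fun (a : A) i => K a (ff A x y i)) (gram K A) := by
    ext i j
    cases i <;> cases j <;> rfl
  rw [← Matrix.det_submatrix_equiv_self e, hgram, Matrix.det_fromBlocks₂₂]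
  congr 1
  rw [Matrix.det_fin_two]
  have key : ∀ i j : Fin 2,
      (Matrix.of (fun i j : Fin 2 => K (ff A x y i) (ff A x y j)) -
        Matrix.of (fun i (a : A) => K (ff A x y i) a) * ⅟(gram K A) *
          Matrix.of (fun (a : A) i => K a (ff A x y i))) i j
        = condCov K A (ff A x y i) (ff A x y j) := by
    intro i j
    simp only [Matrix.sub_apply, Matrix.of_apply, invOf_eq_nonsing_inv, condCov]
    congr 1
    rw [Matrix.mul_assoc]
    simp [Matrix.mul_apply, Matrix.mulVec, dotProduct, Finset.mul_sum]
  rw [key, key, key, key]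
  rfl

/-- Strict submodularity gap via correlation: for positive definite `K`, if
`x, y ∉ A` are distinct and the conditional covariance
`k(x,y) − k_{A,x}ᵀ K_A⁻¹ k_{A,y}` is nonzero, then
`det(K_{A∪{x,y}})·det(K_A) < det(K_{A∪{x}})·det(K_{A∪{y}})`. -/
theorem strict_koteljanskii (K : Matrix D D ℝ) (hK : K.PosDef)
    (A : Finset D) (x y : D) (hx : x ∉ A) (hy : y ∉ A) (hxy : x ≠ y)
    (hcorr : K x y - crossVec K A x ⬝ᵥ ((gram K A)⁻¹ *ᵥ crossVec K A y) ≠ 0) :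
    (gram K (insert x (insert y A))).det * (gram K A).det <
      (gram K (insert x A)).det * (gram K (insert y A)).det := by
  have hsym : ∀ u v, K u v = K v u := fun u v =>
    (hK.1.apply u v).symm.trans (star_trivial _)
  have hdet : 0 < (gram K A).det := (gram_posDef hK A).det_pos
  have hcc : condCov K A x y ≠ 0 := by
    simp only [condCov]
    rw [show (fun a : A => K x ↑a) = crossVec K A x from funext fun a => hsym x a]
    exact hcorr
  have hinvsym : ((gram K A)⁻¹)ᵀ = (gram K A)⁻¹ := by
    have h := ((gram_posDef hK A).inv).1
    ext a b
    exact (star_trivial _).symm.trans (h.apply a b)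
  have hswap : condCov K A y x = condCov K A x y := by
    simp only [condCov]
    rw [hsym y x,
      show (fun a : A => K y ↑a) = (fun a : A => K ↑a y) from funext fun a => hsym y a,
      show (fun a : A => K ↑a x) = (fun a : A => K x ↑a) from funext fun a => hsym a x]
    congr 1
    rw [Matrix.dotProduct_mulVec]
    conv_lhs => rw [← hinvsym]
    rw [Matrix.vecMul_transpose, dotProduct_comm]
  rw [det_gram_insert K hK A x hx, det_gram_insert K hK A y hy,
    det_gram_insert_two K hK A x y hx hy hxy, hswap]
  nlinarith [mul_pos (mul_pos hdet hdet) (mul_self_pos.mpr hcc), hdet,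
    mul_self_pos.mpr hcc]
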